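/- The generating function of the monic Meixner polynomials satisfies Σ_{n=0}^∞ (t^n/n!) 𝒮_n(x; a; p) = ((1-p+t)/(1-p+tp))^x · ((1-p)/(1-p+tp))^a for x ∈ ℕ, a > 0, p ∈ (0,1) and t in a neighborhood of 0; in particular e_t(x+y, a+b) = e_t(x,a)·e_t(y,b). -/

import Mathlib

open Finset Filter



/-- Rising factorial (Pochhammer symbol) `(a)^{(k)} = a(a+1)⋯(a+k-1)`. -/
noncomputable def risingFact (a : ℝ) (k : ℕ) : ℝ := ∏ i ∈ Finset.range k, (a + i)

lemma risingFact_zero (a : ℝ) : risingFact a 0 = 1 := by simp [risingFact]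

lemma risingFact_succ (a : ℝ) (k : ℕ) :
    risingFact a (k + 1) = risingFact a k * (a + k) := by
  simp [risingFact, Finset.prod_range_succ]

lemma risingFact_pos {a : ℝ} (ha : 0 < a) (k : ℕ) : 0 < risingFact a k := by
  apply Finset.prod_pos
  intro i _
  positivity

set_option maxHeartbeats 2000000 in
/-- The binomial series: for `0 < α` and `|u| < 1`,
`∑ (α)^{(m)}/m! u^m = (1-u)^{-α}`. -/
lemma binomialSeries_real {α : ℝ} (hα : 0 < α) {u : ℝ} (hu : |u| < 1) :
    HasSum (fun m : ℕ => risingFact α m / (m.factorial : ℝ) * u ^ m)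
      ((1 - u) ^ (-α) : ℝ) := by
  set c : ℕ → ℝ := fun m => risingFact α m / (m.factorial : ℝ) with hc
  have hcpos : ∀ m, 0 < c m := fun m => by
    exact div_pos (risingFact_pos hα m) (by positivity)
  have hcsucc : ∀ m : ℕ, c (m + 1) = c m * (α + m) / (m + 1) := by
    intro m
    have h2 : (m : ℝ) + 1 ≠ 0 := by positivity
    simp only [hc, risingFact_succ, Nat.factorial_succ]
    push_cast
    rw [div_mul_eq_mul_div, div_div]
    ring_nf
  set r : ℝ := (1 + |u|) / 2 with hr
  have hr0 : 0 < r := by positivity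
  have hr1 : r < 1 := by simp only [hr]; linarith
  have hur : |u| < r := by simp only [hr]; linarith [abs_nonneg u]
  set r' : ℝ := (1 + r) / 2 with hr'
  have hr'0 : 0 < r' := by positivity
  have hr'1 : r' < 1 := by simp only [hr']; linarith
  have hrr' : r < r' := by simp only [hr']; linarith
  -- the bound on the derivative series
  set bnd : ℕ → ℝ := fun m => c m * (m * r ^ (m - 1)) with hbnd
  have hbnd_nonneg : ∀ m, 0 ≤ bnd m := fun m => by
    have := (hcpos m).le
    positivity
  have hbnd_summable : Summable bnd := by
    apply summable_of_ratio_norm_eventually_le hr'1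
    filter_upwards [eventually_ge_atTop (max 1 (⌈α * r / (r' - r)⌉₊ + 1))] with m hm
    have hm1 : 1 ≤ m := le_trans (le_max_left _ _) hm
    have hm2 : (⌈α * r / (r' - r)⌉₊ : ℝ) + 1 ≤ m := by
      exact_mod_cast le_trans (le_max_right _ _) hm
    have hm3 : α * r / (r' - r) ≤ m := by
      have := Nat.le_ceil (α * r / (r' - r))
      linarith
    have hkey : α * r + r * m ≤ r' * m := by
      have h1 : α * r ≤ (r' - r) * m := by
        rw [div_le_iff₀ (by linarith)] at hm3
        linarith [hm3]
      nlinarith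
    have hmm : m = (m - 1) + 1 := (Nat.succ_pred_eq_of_pos hm1).symm
    have hpow : r ^ m = r ^ (m - 1) * r := by
      conv_lhs => rw [hmm]
      rw [pow_succ]
    have e1 : bnd (m + 1) = c m * (α + m) / (m + 1) * ((m + 1) * r ^ m) := by
      simp only [hbnd, hcsucc m]
      push_cast
      ring_nf
    have e2 : bnd (m + 1) = c m * (α + m) * r ^ m := by
      rw [e1]; field_simp
    rw [Real.norm_eq_abs, Real.norm_eq_abs, abs_of_nonneg (hbnd_nonneg _),
      abs_of_nonneg (hbnd_nonneg _), e2, hpow]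
    simp only [hbnd]
    have hc0 : 0 ≤ c m := (hcpos m).le
    have hp0 : 0 ≤ r ^ (m - 1) := by positivity
    calc c m * (α + m) * (r ^ (m - 1) * r) = c m * r ^ (m - 1) * ((α + m) * r) := by ring
      _ ≤ c m * r ^ (m - 1) * (r' * m) := by
          apply mul_le_mul_of_nonneg_left _ (by positivity)
          nlinarith
      _ = r' * (c m * (m * r ^ (m - 1))) := by ring
  set tset : Set ℝ := Set.Ioo (-r) r with htset
  have hopen : IsOpen tset := isOpen_Ioo
  have hpre : IsPreconnected tset := (convex_Ioo _ _).isPreconnected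
  have h0t : (0 : ℝ) ∈ tset := Set.mem_Ioo.2 ⟨by linarith, hr0⟩
  have hut : u ∈ tset := Set.mem_Ioo.2 ⟨by linarith [neg_abs_le u], by linarith [le_abs_self u]⟩
  set g : ℕ → ℝ → ℝ := fun m y => c m * y ^ m with hg
  set g' : ℕ → ℝ → ℝ := fun m y => c m * ((m : ℝ) * y ^ (m - 1)) with hg'
  have hderiv : ∀ (m : ℕ) (y : ℝ), HasDerivAt (g m) (g' m y) y := fun m y =>
    (hasDerivAt_pow m y).const_mul (c m)
  have hbound : ∀ (m : ℕ) (y : ℝ), y ∈ tset → ‖g' m y‖ ≤ bnd m := by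
    intro m y hy
    rcases Set.mem_Ioo.1 hy with ⟨hy1, hy2⟩
    have hyr : |y| ≤ r := by rw [abs_le]; constructor <;> linarith
    simp only [hg', Real.norm_eq_abs, hbnd]
    rw [abs_mul, abs_mul, abs_of_nonneg (hcpos m).le,
      abs_of_nonneg (by positivity : (0:ℝ) ≤ (m:ℝ)), abs_pow]
    exact mul_le_mul_of_nonneg_left
      (mul_le_mul_of_nonneg_left (pow_le_pow_left₀ (abs_nonneg y) hyr _) (Nat.cast_nonneg m))
      (hcpos m).le
  have hg0 : Summable (fun m => g m 0) := by
    apply summable_of_ne_finset_zero (s := ({0} : Finset ℕ))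
    intro m hm
    simp only [Finset.mem_singleton] at hm
    simp [hg, zero_pow hm]
  have hsummable : ∀ y ∈ tset, Summable (fun m => g m y) := fun y hy =>
    summable_of_summable_hasDerivAt_of_isPreconnected hbnd_summable hopen hpre
      (fun m z _ => hderiv m z) hbound h0t hg0 hy
  set F : ℝ → ℝ := fun z => ∑' m, g m z with hFdef
  have hF : ∀ y ∈ tset, HasDerivAt F (∑' m, g' m y) y := fun y hy =>
    hasDerivAt_tsum_of_isPreconnected hbnd_summable hopen hpre
      (fun m z _ => hderiv m z) hbound h0t hg0 hy
  have hSsummable : ∀ y ∈ tset, Summable (fun m => g' m y) := fun y hy =>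
    Summable.of_norm_bounded hbnd_summable (fun m => hbound m y hy)
  have hODE : ∀ y ∈ tset, (1 - y) * (∑' m, g' m y) = α * F y := by
    intro y hy
    have hS : HasSum (fun m => g' m y) (∑' m, g' m y) := (hSsummable y hy).hasSum
    set S := ∑' m, g' m y with hSdef
    have hshift : HasSum (fun m => g' (m + 1) y) S := by
      have h0 : ∑ i ∈ Finset.range 1, g' i y = 0 := by simp [hg']
      have h1 := (hasSum_nat_add_iff' (f := fun m => g' m y) 1).2 hS
      rwa [h0, sub_zero] at h1
    have hptwise : ∀ m : ℕ, g' (m + 1) y = α * g m y + y * g' m y := by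
      intro m
      simp only [hg', hg, Nat.add_sub_cancel, Nat.cast_add, Nat.cast_one]
      rcases Nat.eq_zero_or_pos m with rfl | hm
      · have hone : c 1 = α := by
          simp [hc, risingFact_succ, risingFact_zero]
        have hzero : c 0 = 1 := by simp [hc, risingFact_zero]
        simp [hone, hzero]
      · have hmm : m = (m - 1) + 1 := (Nat.succ_pred_eq_of_pos hm).symm
        have hyp : y * y ^ (m - 1) = y ^ m := by
          conv_rhs => rw [hmm]
          rw [pow_succ]; ring
        have e : c (m + 1) * (((m:ℝ) + 1) * y ^ m) = c m * (α + m) * y ^ m := by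
          rw [hcsucc]; field_simp
        rw [e, ← hyp]
        ring
    have h1 : HasSum (fun m => α * g m y + y * g' m y) (α * F y + y * S) :=
      ((hsummable y hy).hasSum.mul_left α).add (hS.mul_left y)
    have h2 : HasSum (fun m => g' (m + 1) y) (α * F y + y * S) := by
      simpa only [hptwise] using h1
    have h3 := hshift.unique h2
    linear_combination h3
  have hG : ∀ y ∈ tset, HasDerivAt (fun z => F z * (1 - z) ^ α) 0 y := by
    intro y hy
    rcases Set.mem_Ioo.1 hy with ⟨hy1, hy2⟩
    have h1y : 0 < 1 - y := by linarith
    have hd1 : HasDerivAt (fun z : ℝ => 1 - z) (-1) y := by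
      simpa using (hasDerivAt_id y).const_sub 1
    have hd2 : HasDerivAt (fun z : ℝ => (1 - z) ^ α) (-1 * α * (1 - y) ^ (α - 1)) y :=
      hd1.rpow_const (Or.inl h1y.ne')
    have hd : HasDerivAt (fun z => F z * (1 - z) ^ α)
        ((∑' m, g' m y) * (1 - y) ^ α + F y * (-1 * α * (1 - y) ^ (α - 1))) y :=
      (hF y hy).mul hd2
    convert hd using 1
    have hrw : (1 - y) ^ α = (1 - y) ^ (α - 1) * (1 - y) := by
      rw [← Real.rpow_add_one h1y.ne' (α - 1), sub_add_cancel]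
    rw [hrw]
    have hode := hODE y hy
    linear_combination (-(1 - y) ^ (α - 1)) * hode
  have hGconst : F u * (1 - u) ^ α = F 0 * (1 - 0) ^ α := by
    rcases le_or_gt 0 u with h | h
    · have hsub : Set.Icc (0:ℝ) u ⊆ tset := fun z hz =>
        Set.mem_Ioo.2 ⟨by linarith [hz.1], lt_of_le_of_lt hz.2 (lt_of_abs_lt hur)⟩
      exact constant_of_has_deriv_right_zero
        (fun z hz => ((hG z (hsub hz)).continuousAt).continuousWithinAt)
        (fun z hz => ((hG z (hsub ⟨hz.1, hz.2.le⟩)).hasDerivWithinAt))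
        u ⟨h, le_refl u⟩
    · have hsub : Set.Icc u (0:ℝ) ⊆ tset := fun z hz =>
        Set.mem_Ioo.2 ⟨lt_of_lt_of_le (neg_lt_of_abs_lt hur) hz.1, by linarith [hz.2]⟩
      have := constant_of_has_deriv_right_zero
        (fun z hz => ((hG z (hsub hz)).continuousAt).continuousWithinAt)
        (fun z hz => ((hG z (hsub ⟨hz.1, hz.2.le⟩)).hasDerivWithinAt))
        0 ⟨h.le, le_refl 0⟩
      exact this.symm
  have hF0 : F 0 = 1 := by
    have h1 : F 0 = g 0 0 := tsum_eq_single 0 (fun m hm => by simp [hg, zero_pow hm])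
    rw [h1]
    simp [hg, hc, risingFact_zero]
  have h1u : 0 < 1 - u := by
    rcases abs_lt.1 hu with ⟨h1, h2⟩; linarith
  have hval : F u = (1 - u) ^ (-α) := by
    have hone : F u * (1 - u) ^ α = 1 := by
      rw [hGconst, hF0]; norm_num
    rw [Real.rpow_neg h1u.le]
    exact eq_inv_of_mul_eq_one_left hone
  rw [← hval]
  exact (hsummable u hut).hasSum


/-- The monic Meixner polynomial
`𝒮_n(x;a;p) = ∑_{k=0}^n C(n,k) (1-1/p)^{k-n} (a+k)^{(n-k)} (x)_k`. -/
noncomputable def meixner (n : ℕ) (a p : ℝ) (x : ℕ) : ℝ :=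
  ∑ k ∈ Finset.range (n + 1),
    (n.choose k : ℝ) * (1 - 1 / p) ^ ((k : ℤ) - (n : ℤ)) *
      risingFact (a + k) (n - k) * (x.descFactorial k : ℝ)

/-- The closed form of the generating function of monic Meixner polynomials:
`e_t(x,a) = ((1-p+t)/(1-p+tp))^x ((1-p)/(1-p+tp))^a`. -/
noncomputable def meixnerGen (p t : ℝ) (x : ℕ) (a : ℝ) : ℝ :=
  ((1 - p + t) / (1 - p + t * p)) ^ x * ((1 - p) / (1 - p + t * p)) ^ a

set_option maxHeartbeats 2000000 in
/-- for `t` in a neighborhood of `0`, the exponential generating function of the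
monic Meixner polynomials equals `e_t(x,a)`; in particular `e_t` satisfies the multiplicative
identity `e_t(x+y, a+b) = e_t(x,a)·e_t(y,b)`. -/
theorem stmt5 (p : ℝ) (hp : p ∈ Set.Ioo (0 : ℝ) 1) :
    ∃ ε > 0, ∀ t : ℝ, |t| < ε →
      (∀ (x : ℕ) (a : ℝ), 0 < a →
          HasSum (fun n : ℕ => t ^ n / (n.factorial : ℝ) * meixner n a p x)
            (meixnerGen p t x a))
        ∧ ∀ (x y : ℕ) (a b : ℝ), 0 < a → 0 < b →
            meixnerGen p t (x + y) (a + b) = meixnerGen p t x a * meixnerGen p t y b := by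

  obtain ⟨hp0, hp1⟩ := hp
  have h1p : 0 < 1 - p := by linarith
  refine ⟨(1 - p) / 2, by linarith, fun t ht => ?_⟩
  obtain ⟨ht1, ht2⟩ := abs_lt.1 ht
  have htp : 0 < 1 - p + t * p := by nlinarith
  have h1t : 0 < 1 - p + t := by linarith
  have hB : 0 < (1 - p) / (1 - p + t * p) := div_pos h1p htp
  set B := (1 - p) / (1 - p + t * p) with hBdef
  have hne1 : (1 : ℝ) - p ≠ 0 := h1p.ne'
  have hpne : p ≠ 0 := hp0.ne'
  have hp1ne : p - 1 ≠ 0 := by linarith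
  constructor
  · intro x a ha
    set u : ℝ := -(t * p) / (1 - p) with hudef
    have hu1 : |u| < 1 := by
      rw [hudef, abs_div, abs_neg, abs_of_pos h1p, div_lt_one h1p, abs_mul, abs_of_pos hp0]
      nlinarith [abs_nonneg t, ht]
    have h1u : 1 - u = (1 - p + t * p) / (1 - p) := by
      rw [hudef]; field_simp; ring
    have h1upos : 0 < 1 - u := by rw [h1u]; positivity
    have hBu : B = (1 - u)⁻¹ := by rw [h1u, hBdef, inv_div]
    have hq : (1 - 1 / p) = (p - 1) / p := by field_simp
    have hqne : (1 - 1 / p) ≠ 0 := by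
      rw [hq]; exact div_ne_zero hp1ne hpne
    have hu2 : u = t / (1 - 1 / p) := by
      rw [hq, hudef, div_div_eq_mul_div]; field_simp; ring
    set f : ℕ → ℕ → ℝ := fun k n => t ^ n / (n.factorial : ℝ) *
      ((n.choose k : ℝ) * (1 - 1 / p) ^ ((k : ℤ) - (n : ℤ)) *
        risingFact (a + k) (n - k) * (x.descFactorial k : ℝ)) with hfdef
    have hzero1 : ∀ k n : ℕ, n < k → f k n = 0 := fun k n hk => by
      simp [hfdef, Nat.choose_eq_zero_of_lt hk]
    have hzero2 : ∀ k n : ℕ, x < k → f k n = 0 := fun k n hk => by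
      simp [hfdef, Nat.descFactorial_eq_zero_iff_lt.2 hk]
    have hterm : ∀ n : ℕ, t ^ n / (n.factorial : ℝ) * meixner n a p x
        = ∑ k ∈ Finset.range (x + 1), f k n := by
      intro n
      have e0 : t ^ n / (n.factorial : ℝ) * meixner n a p x
          = ∑ k ∈ Finset.range (n + 1), f k n := by
        rw [meixner, Finset.mul_sum]
      have e1 : ∑ k ∈ Finset.range (n + 1), f k n = ∑ k ∈ Finset.range (n + x + 2), f k n :=
        Finset.sum_subset (Finset.range_subset_range.2 (by omega)) (by
          intro k _ hk2
          simp only [Finset.mem_range, not_lt] at hk2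
          exact hzero1 k n (by omega))
      have e2 : ∑ k ∈ Finset.range (x + 1), f k n = ∑ k ∈ Finset.range (n + x + 2), f k n :=
        Finset.sum_subset (Finset.range_subset_range.2 (by omega)) (by
          intro k _ hk2
          simp only [Finset.mem_range, not_lt] at hk2
          exact hzero2 k n (by omega))
      rw [e0, e1, ← e2]
    have hstep : ∀ k : ℕ, HasSum (f k)
        ((x.descFactorial k : ℝ) / (k.factorial : ℝ) * t ^ k * B ^ (a + (k : ℝ))) := by
      intro k
      have hαk : 0 < a + (k : ℝ) := by positivity
      have hbin := binomialSeries_real hαk hu1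
      have hmul := hbin.mul_left ((x.descFactorial k : ℝ) / (k.factorial : ℝ) * t ^ k)
      have hfun : ∀ m : ℕ, (x.descFactorial k : ℝ) / (k.factorial : ℝ) * t ^ k *
          (risingFact (a + (k : ℝ)) m / (m.factorial : ℝ) * u ^ m) = f k (m + k) := by
        intro m
        have hch : ((m + k).choose k : ℝ) * (k.factorial : ℝ) * (m.factorial : ℝ)
            = ((m + k).factorial : ℝ) := by
          have h := Nat.choose_mul_factorial_mul_factorial (Nat.le_add_left k m)
          rw [Nat.add_sub_cancel] at h
          exact_mod_cast h
        have hzpow : (1 - 1 / p) ^ ((k : ℤ) - ((m + k : ℕ) : ℤ)) = ((1 - 1 / p) ^ m)⁻¹ := by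
          have he : (k : ℤ) - ((m + k : ℕ) : ℤ) = -(m : ℤ) := by push_cast; ring
          rw [he, zpow_neg, zpow_natCast]
        simp only [hfdef]
        rw [hzpow, Nat.add_sub_cancel, hu2, div_pow, pow_add]
        have hfm : ((m.factorial : ℕ) : ℝ) ≠ 0 := by positivity
        have hfk : ((k.factorial : ℕ) : ℝ) ≠ 0 := by positivity
        have hfmk : (((m + k).factorial : ℕ) : ℝ) ≠ 0 := by positivity
        have hqm : (1 - 1 / p) ^ m ≠ 0 := pow_ne_zero _ hqne
        field_simp
        linear_combination (-((x.descFactorial k : ℝ) * t ^ k * t ^ m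
          * risingFact (a + (k : ℝ)) m)) * hch
      have hsum0 : ∑ i ∈ Finset.range k, f k i = 0 :=
        Finset.sum_eq_zero fun i hi => hzero1 k i (Finset.mem_range.1 hi)
      have hBval : (x.descFactorial k : ℝ) / (k.factorial : ℝ) * t ^ k
            * ((1 - u) ^ (-(a + (k : ℝ))))
          = (x.descFactorial k : ℝ) / (k.factorial : ℝ) * t ^ k * B ^ (a + (k : ℝ)) := by
        rw [hBu, Real.rpow_neg h1upos.le, ← Real.inv_rpow h1upos.le]
      have hfinal : HasSum (fun m => f k (m + k))
          ((x.descFactorial k : ℝ) / (k.factorial : ℝ) * t ^ k * B ^ (a + (k : ℝ))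
            - ∑ i ∈ Finset.range k, f k i) := by
        rw [hsum0, sub_zero, ← hBval]
        exact (funext hfun) ▸ hmul
      exact (hasSum_nat_add_iff' k).1 hfinal
    have hsum : HasSum (fun n => ∑ k ∈ Finset.range (x + 1), f k n)
        (∑ k ∈ Finset.range (x + 1),
          (x.descFactorial k : ℝ) / (k.factorial : ℝ) * t ^ k * B ^ (a + (k : ℝ))) :=
      hasSum_sum (fun k _ => hstep k)
    have hval : ∑ k ∈ Finset.range (x + 1),
          (x.descFactorial k : ℝ) / (k.factorial : ℝ) * t ^ k * B ^ (a + (k : ℝ))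
        = meixnerGen p t x a := by
      have hterm2 : ∀ k : ℕ,
          (x.descFactorial k : ℝ) / (k.factorial : ℝ) * t ^ k * B ^ (a + (k : ℝ))
          = B ^ a * ((x.choose k : ℝ) * (t * B) ^ k) := by
        intro k
        rw [Real.rpow_add hB, Real.rpow_natCast]
        have hdf : (x.descFactorial k : ℝ) = (k.factorial : ℝ) * (x.choose k : ℝ) := by
          exact_mod_cast Nat.descFactorial_eq_factorial_mul_choose x k
        have hfk : ((k.factorial : ℕ) : ℝ) ≠ 0 := by positivity
        rw [hdf, mul_pow]
        field_simp
      simp_rw [hterm2]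
      rw [← Finset.mul_sum]
      have htB : t * B + 1 = (1 - p + t) / (1 - p + t * p) := by
        rw [hBdef]; field_simp; ring
      have hbinom : ∑ k ∈ Finset.range (x + 1), (x.choose k : ℝ) * (t * B) ^ k
          = ((1 - p + t) / (1 - p + t * p)) ^ x := by
        rw [← htB, add_pow]
        apply Finset.sum_congr rfl
        intro k _
        simp [mul_comm]
      rw [hbinom, meixnerGen, ← hBdef]
      exact mul_comm _ _
    have hfun2 : (fun n => t ^ n / (n.factorial : ℝ) * meixner n a p x)
        = fun n => ∑ k ∈ Finset.range (x + 1), f k n := funext hterm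
    rw [hfun2, ← hval]
    exact hsum
  · intro x y a b ha hb
    simp only [meixnerGen]
    rw [pow_add, Real.rpow_add (div_pos h1p htp)]
    ring
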